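/- For all natural numbers x₁ ≥ 1 and x₂, …, xₙ, the Sprague–Grundy value of the Auxiliary Nim game is strictly increasing in the auxiliary pile: N(x₁, x₂, …, xₙ) > N(x₁ − 1, x₂, …, xₙ). -/

import Mathlib

lemma sum_update_lt {n : ℕ} (x : Fin n → ℕ) (i : Fin n) (v : ℕ) (h : v < x i) :
    (∑ j, Function.update x i v j) < ∑ j, x j := by
  apply Finset.sum_lt_sum
  · intro j _
    rcases eq_or_ne j i with rfl | hj
    · simpa using h.le
    · simp [Function.update_of_ne hj]
  · exact ⟨i, Finset.mem_univ i, by simpa using h⟩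

/-- Sprague–Grundy value of the Auxiliary Nim game
`(*a) ⊞ ((*x 0) ⊕ ⋯ ⊕ (*x (n-1)))`, where `x : Fin n → ℕ` lists the piles
`x₂, …, xₙ` and `a` is the auxiliary pile `x₁`.  It is the mex of the
Sprague–Grundy values of the one-move successors: strictly decrease `a`,
or strictly decrease exactly one of the piles `x i`, or do both. -/
noncomputable def NAux {n : ℕ} (a : ℕ) (x : Fin n → ℕ) : ℕ :=
  sInf {m : ℕ |
    (∀ a', a' < a → NAux a' x ≠ m) ∧
    (∀ (i : Fin n) (v : ℕ), v < x i → NAux a (Function.update x i v) ≠ m) ∧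
    (∀ a', a' < a → ∀ (i : Fin n) (v : ℕ), v < x i →
      NAux a' (Function.update x i v) ≠ m)}
termination_by a + ∑ j, x j
decreasing_by
  · exact Nat.add_lt_add_right ‹_› _
  · exact Nat.add_lt_add_left (sum_update_lt x i v ‹_›) a
  · exact Nat.add_lt_add ‹_› (sum_update_lt x i v ‹_›)

lemma NAux_le {n : ℕ} (a : ℕ) (x : Fin n → ℕ) : NAux a x ≤ a + ∑ j, x j := by
  rw [NAux]
  apply Nat.sInf_le
  refine ⟨?_, ?_, ?_⟩
  · intro a' ha'
    have := NAux_le a' x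
    omega
  · intro i v hv
    have := NAux_le a (Function.update x i v)
    have := sum_update_lt x i v hv
    omega
  · intro a' ha' i v hv
    have := NAux_le a' (Function.update x i v)
    have := sum_update_lt x i v hv
    omega
termination_by a + ∑ j, x j
decreasing_by
  · exact Nat.add_lt_add_right ‹_› _
  · exact Nat.add_lt_add_left (sum_update_lt x i v ‹_›) a
  · exact Nat.add_lt_add ‹_› (sum_update_lt x i v ‹_›)

lemma NAux_mem {n : ℕ} (a : ℕ) (x : Fin n → ℕ) :
    (∀ a', a' < a → NAux a' x ≠ NAux a x) ∧
    (∀ (i : Fin n) (v : ℕ), v < x i → NAux a (Function.update x i v) ≠ NAux a x) ∧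
    (∀ a', a' < a → ∀ (i : Fin n) (v : ℕ), v < x i →
      NAux a' (Function.update x i v) ≠ NAux a x) := by
  have hw : (a + ∑ j, x j) ∈ {m : ℕ |
      (∀ a', a' < a → NAux a' x ≠ m) ∧
      (∀ (i : Fin n) (v : ℕ), v < x i → NAux a (Function.update x i v) ≠ m) ∧
      (∀ a', a' < a → ∀ (i : Fin n) (v : ℕ), v < x i →
        NAux a' (Function.update x i v) ≠ m)} := by
    refine ⟨?_, ?_, ?_⟩
    · intro a' ha'
      have := NAux_le a' x; omega
    · intro i v hv
      have := NAux_le a (Function.update x i v)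
      have := sum_update_lt x i v hv; omega
    · intro a' ha' i v hv
      have := NAux_le a' (Function.update x i v)
      have := sum_update_lt x i v hv; omega
  have heq : NAux a x = sInf {m : ℕ |
      (∀ a', a' < a → NAux a' x ≠ m) ∧
      (∀ (i : Fin n) (v : ℕ), v < x i → NAux a (Function.update x i v) ≠ m) ∧
      (∀ a', a' < a → ∀ (i : Fin n) (v : ℕ), v < x i →
        NAux a' (Function.update x i v) ≠ m)} := by rw [NAux]
  have := Nat.sInf_mem ⟨_, hw⟩
  rw [← heq] at this
  exact this

theorem auxNim_strictMono' {n : ℕ} (hn : 1 ≤ n) (x₁ : ℕ) (hx₁ : 1 ≤ x₁)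
    (x : Fin n → ℕ) : NAux (x₁ - 1) x < NAux x₁ x := by
  obtain ⟨h1, h2, h3⟩ := NAux_mem x₁ x
  have hlt : x₁ - 1 < x₁ := by omega
  have hne := h1 _ hlt
  rcases lt_or_ge (NAux (x₁ - 1) x) (NAux x₁ x) with h | h
  · exact h
  have hlt2 : NAux x₁ x < NAux (x₁ - 1) x := lt_of_le_of_ne h (Ne.symm hne)
  exfalso
  have heq : NAux (x₁ - 1) x = sInf {m : ℕ |
      (∀ a', a' < x₁ - 1 → NAux a' x ≠ m) ∧
      (∀ (i : Fin n) (v : ℕ), v < x i → NAux (x₁ - 1) (Function.update x i v) ≠ m) ∧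
      (∀ a', a' < x₁ - 1 → ∀ (i : Fin n) (v : ℕ), v < x i →
        NAux a' (Function.update x i v) ≠ m)} := by rw [NAux]
  rw [heq] at hlt2
  have hnm := Nat.notMem_of_lt_sInf hlt2
  simp only [Set.mem_setOf_eq, not_and_or] at hnm
  rcases hnm with hc | hc | hc
  · push_neg at hc
    obtain ⟨a'', ha'', heq'⟩ := hc
    exact h1 a'' (by omega) heq'
  · push_neg at hc
    obtain ⟨i, v, hv, heq'⟩ := hc
    exact h3 (x₁ - 1) hlt i v hv heq'
  · push_neg at hc
    obtain ⟨a'', ha'', i, v, hv, heq'⟩ := hc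
    exact h3 a'' (by omega) i v hv heq'

/-- The Sprague–Grundy value of Auxiliary Nim is strictly increasing in the
auxiliary pile: for `x₁ ≥ 1`, `N(x₁, x₂, …, xₙ) > N(x₁ - 1, x₂, …, xₙ)`. -/
theorem auxNim_strictMono {n : ℕ} (hn : 1 ≤ n) (x₁ : ℕ) (hx₁ : 1 ≤ x₁)
    (x : Fin n → ℕ) : NAux (x₁ - 1) x < NAux x₁ x := by
  exact auxNim_strictMono' hn x₁ hx₁ x
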